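/- arXiv:1710.05332 — 5 statements merged into one kernel-verified Lean document; each statement's English description precedes it below -/
import Mathlib

section
/- For n boxes with positive costs, define T_k([n]) as the complete homogeneous symmetric polynomial of degree k. Then (k+1)·T_{k+1}([n]) − T_1([n])·T_k([n]) equals the sum over all nonnegative integer vectors x = (x_1,...,x_n) with x_1+...+x_n = k of (∏_{i=1}^n c_i^{x_i})·(∑_{j=1}^n x_j c_j). -/
noncomputable def T (c : ℕ → ℝ) (n k : ℕ) : ℝ :=
  ∑ x ∈ Finset.Nat.antidiagonalTuple n k, ∏ i : Fin n, c i ^ x i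

open Finset

lemma key (c : ℕ → ℝ) (n k : ℕ) (j : Fin n) :
    ∑ x ∈ Finset.Nat.antidiagonalTuple n k,
        ((x j : ℝ) + 1) * (c j * ∏ i : Fin n, c i ^ x i)
      = ∑ y ∈ Finset.Nat.antidiagonalTuple n (k+1),
          (y j : ℝ) * ∏ i : Fin n, c i ^ y i := by
  classical
  set e : Fin n → ℕ := fun i => if i = j then 1 else 0 with he
  have hesum : ∑ i : Fin n, e i = 1 := by simp [he]
  have hfil : ∑ y ∈ Finset.Nat.antidiagonalTuple n (k+1),
        (y j : ℝ) * ∏ i : Fin n, c i ^ y i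
      = ∑ y ∈ (Finset.Nat.antidiagonalTuple n (k+1)).filter (fun y => y j ≠ 0),
        (y j : ℝ) * ∏ i : Fin n, c i ^ y i := by
    refine (Finset.sum_filter_of_ne ?_).symm
    intro y _ h hy
    rw [hy] at h
    simp at h
  rw [hfil]
  refine Finset.sum_nbij' (i := fun x => x + e) (j := fun y => y - e)
    ?_ ?_ ?_ ?_ ?_
  · intro x hx
    rw [Finset.Nat.mem_antidiagonalTuple] at hx
    rw [Finset.mem_filter, Finset.Nat.mem_antidiagonalTuple]
    constructor
    · show ∑ i : Fin n, (x i + e i) = k + 1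
      rw [Finset.sum_add_distrib, hx, hesum]
    · show x j + e j ≠ 0
      simp [he]
  · intro y hy
    rw [Finset.mem_filter, Finset.Nat.mem_antidiagonalTuple] at hy
    obtain ⟨hsum, hj⟩ := hy
    rw [Finset.Nat.mem_antidiagonalTuple]
    have hadd : (∑ i : Fin n, (y i - e i)) + ∑ i : Fin n, e i
        = ∑ i : Fin n, y i := by
      rw [← Finset.sum_add_distrib]
      refine Finset.sum_congr rfl fun i _ => ?_
      by_cases h : i = j
      · subst h; simp only [he, if_pos rfl]; omega
      · simp [he, h]
    show ∑ i : Fin n, (y i - e i) = k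
    omega
  · intro x _
    funext i
    show x i + e i - e i = x i
    omega
  · intro y hy
    rw [Finset.mem_filter] at hy
    funext i
    show y i - e i + e i = y i
    by_cases h : i = j
    · subst h
      simp only [he, if_pos rfl]
      have : y i ≠ 0 := hy.2
      omega
    · simp [he, h]
  · intro x hx
    have h1 : (x + e) j = x j + 1 := by simp [he]
    have h2 : ∏ i : Fin n, c i ^ (x + e) i
        = c j * ∏ i : Fin n, c i ^ x i := by
      have hsplit : ∀ i : Fin n, c i ^ (x + e) i = c i ^ x i * c i ^ e i :=
        fun i => by rw [Pi.add_apply, pow_add]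
      rw [Finset.prod_congr rfl fun i _ => hsplit i, Finset.prod_mul_distrib,
        mul_comm]
      congr 1
      rw [Fintype.prod_eq_single j (fun i hi => by simp [he, hi])]
      simp [he]
    show ((x j : ℝ) + 1) * (c j * ∏ i : Fin n, c i ^ x i)
        = (((x + e) j : ℕ) : ℝ) * ∏ i : Fin n, c i ^ (x + e) i
    rw [h1, h2]
    push_cast
    ring

lemma T_one (c : ℕ → ℝ) (n : ℕ) : T c n 1 = ∑ j : Fin n, c j := by
  have h1 : ∀ y ∈ Finset.Nat.antidiagonalTuple n 1, (∑ j : Fin n, (y j : ℝ)) = 1 := by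
    intro y hy
    rw [Finset.Nat.mem_antidiagonalTuple] at hy
    have := congrArg (Nat.cast : ℕ → ℝ) hy
    push_cast at this
    simpa using this
  have h2 : ∑ j : Fin n, c j
      = ∑ j : Fin n, ∑ y ∈ Finset.Nat.antidiagonalTuple n (0+1),
          (y j : ℝ) * ∏ i : Fin n, c i ^ y i := by
    refine Finset.sum_congr rfl fun j _ => ?_
    rw [← key]
    simp [Finset.Nat.antidiagonalTuple_zero_right]
  rw [h2, Finset.sum_comm]
  unfold T
  refine Finset.sum_congr rfl fun y hy => ?_
  rw [← Finset.sum_mul, h1 y (by simpa using hy), one_mul]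

set_option linter.unusedVariables false in
theorem stmt1 (c : ℕ → ℝ) (hc : ∀ i, 0 < c i) (n k : ℕ) :
    (k + 1 : ℝ) * T c n (k + 1) - T c n 1 * T c n k =
      ∑ x ∈ Finset.Nat.antidiagonalTuple n k,
        (∏ i : Fin n, c i ^ x i) * (∑ j : Fin n, (x j : ℝ) * c j) := by
  have hL : (k + 1 : ℝ) * T c n (k + 1)
      = ∑ x ∈ Finset.Nat.antidiagonalTuple n k,
          ∑ j : Fin n, ((x j : ℝ) + 1) * (c j * ∏ i : Fin n, c i ^ x i) := by
    calc (k + 1 : ℝ) * T c n (k + 1)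
        = ∑ y ∈ Finset.Nat.antidiagonalTuple n (k+1),
            ((k : ℝ) + 1) * ∏ i : Fin n, c i ^ y i := by
          rw [T, Finset.mul_sum]
      _ = ∑ y ∈ Finset.Nat.antidiagonalTuple n (k+1),
            (∑ j : Fin n, (y j : ℝ)) * ∏ i : Fin n, c i ^ y i := by
          refine Finset.sum_congr rfl fun y hy => ?_
          rw [Finset.Nat.mem_antidiagonalTuple] at hy
          have := congrArg (Nat.cast : ℕ → ℝ) hy
          push_cast at this
          rw [this]
      _ = ∑ y ∈ Finset.Nat.antidiagonalTuple n (k+1),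
            ∑ j : Fin n, (y j : ℝ) * ∏ i : Fin n, c i ^ y i := by
          exact Finset.sum_congr rfl fun y _ => Finset.sum_mul _ _ _
      _ = ∑ j : Fin n, ∑ y ∈ Finset.Nat.antidiagonalTuple n (k+1),
            (y j : ℝ) * ∏ i : Fin n, c i ^ y i := Finset.sum_comm
      _ = ∑ j : Fin n, ∑ x ∈ Finset.Nat.antidiagonalTuple n k,
            ((x j : ℝ) + 1) * (c j * ∏ i : Fin n, c i ^ x i) :=
          Finset.sum_congr rfl fun j _ => (key c n k j).symm
      _ = _ := Finset.sum_comm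
  rw [hL, T_one]
  unfold T
  rw [Finset.mul_sum, ← Finset.sum_sub_distrib]
  refine Finset.sum_congr rfl fun x _ => ?_
  rw [Finset.sum_mul, ← Finset.sum_sub_distrib, Finset.mul_sum]
  exact Finset.sum_congr rfl fun j _ => by ring
end

section
/- For each integer m ≥ 2, the polynomial f_m(r) = −(m−1) + r + r² + ... + r^m has a unique root in the open interval (0,1). -/
/-- f_m(r) = -(m-1) + r + r^2 + ... + r^m. -/
noncomputable def f (m : ℕ) (r : ℝ) : ℝ := -((m : ℝ) - 1) + ∑ j ∈ Finset.Icc 1 m, r ^ j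

lemma f_strictMonoOn (m : ℕ) (hm : 2 ≤ m) : StrictMonoOn (f m) (Set.Icc 0 1) := by
  intro a ha b hb hab
  unfold f
  have h1 : (1 : ℕ) ∈ Finset.Icc 1 m := by
    simp [Finset.mem_Icc]; omega
  have : ∑ j ∈ Finset.Icc 1 m, a ^ j < ∑ j ∈ Finset.Icc 1 m, b ^ j := by
    apply Finset.sum_lt_sum
    · intro i hi
      exact pow_le_pow_left₀ ha.1 hab.le i
    · exact ⟨1, h1, by simpa using hab⟩
  linarith

/-- f_m has a unique root in (0,1) for m ≥ 2. -/
theorem stmt4 (m : ℕ) (hm : 2 ≤ m) :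
    ∃! r : ℝ, r ∈ Set.Ioo (0 : ℝ) 1 ∧ f m r = 0 := by
  have hmono := f_strictMonoOn m hm
  have hcont : ContinuousOn (f m) (Set.Icc (0:ℝ) 1) := by
    apply Continuous.continuousOn
    unfold f
    continuity
  have hf0 : f m 0 < 0 := by
    unfold f
    have : ∑ j ∈ Finset.Icc 1 m, (0:ℝ) ^ j = 0 := by
      apply Finset.sum_eq_zero
      intro i hi
      have : 1 ≤ i := (Finset.mem_Icc.mp hi).1
      simp [zero_pow (by omega : i ≠ 0)]
    rw [this]
    have : (2:ℝ) ≤ (m:ℝ) := by exact_mod_cast hm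
    linarith
  have hf1 : f m 1 = 1 := by
    unfold f
    simp [Finset.sum_const, Nat.card_Icc]
  have hex : ∃ r ∈ Set.Ioo (0:ℝ) 1, f m r = 0 := by
    have := intermediate_value_Ioo (by norm_num : (0:ℝ) ≤ 1) hcont
    have hmem : (0:ℝ) ∈ Set.Ioo (f m 0) (f m 1) := ⟨hf0, by rw [hf1]; norm_num⟩
    obtain ⟨r, hr, hfr⟩ := this hmem
    exact ⟨r, hr, hfr⟩
  obtain ⟨r, hr, hfr⟩ := hex
  refine ⟨r, ⟨hr, hfr⟩, ?_⟩
  rintro s ⟨hs, hfs⟩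
  have hrI : r ∈ Set.Icc (0:ℝ) 1 := ⟨hr.1.le, hr.2.le⟩
  have hsI : s ∈ Set.Icc (0:ℝ) 1 := ⟨hs.1.le, hs.2.le⟩
  exact hmono.injOn hsI hrI (by rw [hfs, hfr])
end

section
/- For n = 2 boxes with positive costs c_1, c_2 and k ≥ 1 balls, define C(i,j) = i·c_1 + (k−i)·c_2 + c_1 if i < j, = i·c_1 + (k−i)·c_2 if i = j, and = i·c_1 + (k−i)·c_2 + c_2 if i > j, and let q_k(j) = 1 − k·c_1^{k−j}·c_2^j/T_k([2]). Then for every i ∈ {0,...,k}, ∑_{j=0}^k q_k(j)·C(i,j) = k·T_{k+1}([2])/T_k([2]). -/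
/-- T_k([2]) = ∑_{j=0}^k c₁^{k-j} c₂^j. -/
noncomputable def T2 (c₁ c₂ : ℝ) (k : ℕ) : ℝ :=
  ∑ j ∈ Finset.range (k + 1), c₁ ^ (k - j) * c₂ ^ j

/-- Cost C(i,j) when the Hider hides i balls in box 1 and the Searcher opens box 1
at most j times in her first k searches. -/
noncomputable def Cost (c₁ c₂ : ℝ) (k i j : ℕ) : ℝ :=
  (i : ℝ) * c₁ + ((k : ℝ) - i) * c₂ + (if i < j then c₁ else if i = j then 0 else c₂)

/-- the mixed strategy q_k equalizes the cost. -/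
theorem stmt7 (c₁ c₂ : ℝ) (h₁ : 0 < c₁) (h₂ : 0 < c₂) (k : ℕ) (hk : 1 ≤ k)
    (i : ℕ) (hi : i ≤ k) :
    ∑ j ∈ Finset.range (k + 1),
        (1 - (k : ℝ) * c₁ ^ (k - j) * c₂ ^ j / T2 c₁ c₂ k) * Cost c₁ c₂ k i j =
      (k : ℝ) * T2 c₁ c₂ (k + 1) / T2 c₁ c₂ k := by
  set a : ℕ → ℝ := fun j => c₁ ^ (k - j) * c₂ ^ j with ha
  set b : ℕ → ℝ := fun j => c₁ ^ (k + 1 - j) * c₂ ^ j with hb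
  set T : ℝ := T2 c₁ c₂ k with hT
  set T' : ℝ := T2 c₁ c₂ (k + 1) with hT'
  have hTsum : T = ∑ j ∈ Finset.range (k + 1), a j := rfl
  have hT'sum : T' = ∑ j ∈ Finset.range (k + 2), b j := rfl
  have hTpos : 0 < T := by
    rw [hTsum]
    apply Finset.sum_pos
    · intro j _; positivity
    · exact ⟨0, by simp⟩
  have hTne : T ≠ 0 := ne_of_gt hTpos
  set B : ℝ := (i : ℝ) * c₁ + ((k : ℝ) - i) * c₂ with hB
  -- splitting lemma for the ite sum
  have hsplit : ∀ f : ℕ → ℝ,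
      ∑ j ∈ Finset.range (k + 1),
          f j * (if i < j then c₁ else if i = j then 0 else c₂)
        = c₂ * ∑ j ∈ Finset.range i, f j
          + c₁ * ∑ j ∈ Finset.Ico (i + 1) (k + 1), f j := by
    intro f
    rw [Finset.range_eq_Ico,
      ← Finset.sum_Ico_consecutive _ (Nat.zero_le i) (by omega : i ≤ k + 1),
      Finset.sum_eq_sum_Ico_succ_bot (by omega : i < k + 1)]
    have e1 : ∑ j ∈ Finset.Ico 0 i,
        f j * (if i < j then c₁ else if i = j then 0 else c₂)
        = c₂ * ∑ j ∈ Finset.Ico 0 i, f j := by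
      rw [Finset.mul_sum]
      refine Finset.sum_congr rfl fun j hj => ?_
      have hji : j < i := (Finset.mem_Ico.mp hj).2
      rw [if_neg (by omega), if_neg (by omega)]
      ring
    have e2 : ∑ j ∈ Finset.Ico (i + 1) (k + 1),
        f j * (if i < j then c₁ else if i = j then 0 else c₂)
        = c₁ * ∑ j ∈ Finset.Ico (i + 1) (k + 1), f j := by
      rw [Finset.mul_sum]
      refine Finset.sum_congr rfl fun j hj => ?_
      have hji : i + 1 ≤ j := (Finset.mem_Ico.mp hj).1
      rw [if_pos (by omega)]
      ring
    rw [e1, e2, if_neg (lt_irrefl i), if_pos rfl]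
    rw [Finset.range_eq_Ico]
    ring
  -- c₁ * T and c₂ * T
  have hc1T : c₁ * T = T' - c₂ ^ (k + 1) := by
    rw [hTsum, hT'sum, Finset.mul_sum, Finset.sum_range_succ (f := b) (n := k + 1)]
    have : ∑ j ∈ Finset.range (k + 1), c₁ * a j = ∑ j ∈ Finset.range (k + 1), b j := by
      refine Finset.sum_congr rfl fun j hj => ?_
      have hjk : j ≤ k := by simpa [Nat.lt_succ_iff] using hj
      have : k + 1 - j = (k - j) + 1 := by omega
      simp only [ha, hb, this, pow_succ]
      ring
    rw [this]
    simp [hb]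
  have hc2T : c₂ * T = T' - c₁ ^ (k + 1) := by
    rw [hTsum, hT'sum, Finset.mul_sum, Finset.sum_range_succ' (f := b) (n := k + 1)]
    have : ∑ j ∈ Finset.range (k + 1), c₂ * a j
        = ∑ j ∈ Finset.range (k + 1), b (j + 1) := by
      refine Finset.sum_congr rfl fun j hj => ?_
      have : k + 1 - (j + 1) = k - j := by omega
      simp only [ha, hb, this, pow_succ]
      ring
    rw [this]
    simp [hb]
  have hTT : (c₁ + c₂) * T = 2 * T' - c₁ ^ (k + 1) - c₂ ^ (k + 1) := by
    linear_combination hc1T + hc2T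
  -- the key middle sum
  have hS : c₂ * ∑ j ∈ Finset.range i, a j
      + c₁ * ∑ j ∈ Finset.Ico (i + 1) (k + 1), a j
      = T' - c₁ ^ (k + 1) - c₂ ^ (k + 1) := by
    have e1 : c₂ * ∑ j ∈ Finset.range i, a j = ∑ j ∈ Finset.Ico 1 (i + 1), b j := by
      rw [Finset.mul_sum, Finset.sum_Ico_eq_sum_range]
      simp only [Nat.add_sub_cancel]
      refine Finset.sum_congr rfl fun j hj => ?_
      have : k + 1 - (1 + j) = k - j := by omega
      simp only [ha, hb, this]
      ring
    have e2 : c₁ * ∑ j ∈ Finset.Ico (i + 1) (k + 1), a j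
        = ∑ j ∈ Finset.Ico (i + 1) (k + 1), b j := by
      rw [Finset.mul_sum]
      refine Finset.sum_congr rfl fun j hj => ?_
      have hjk : j < k + 1 := (Finset.mem_Ico.mp hj).2
      have : k + 1 - j = (k - j) + 1 := by omega
      simp only [ha, hb, this, pow_succ]
      ring
    rw [e1, e2, Finset.sum_Ico_consecutive _ (by omega : 1 ≤ i + 1) (by omega : i + 1 ≤ k + 1)]
    have e3 : ∑ j ∈ Finset.Ico 1 (k + 1), b j
        = T' - b 0 - b (k + 1) := by
      rw [hT'sum, Finset.sum_range_succ (f := b) (n := k + 1),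
        Finset.range_eq_Ico, Finset.sum_eq_sum_Ico_succ_bot (by omega : 0 < k + 1)]
      ring
    rw [e3]
    simp [hb]
  -- sum of plain costs
  have h1 : ∑ j ∈ Finset.range (k + 1), Cost c₁ c₂ k i j
      = ((k : ℝ) + 1) * B + (((k : ℝ) - i) * c₁ + (i : ℝ) * c₂) := by
    have : ∀ j, Cost c₁ c₂ k i j
        = B + (1 : ℝ) * (if i < j then c₁ else if i = j then 0 else c₂) := by
      intro j; simp [Cost, hB]
    simp only [this]
    have hki : ((k + 1 - (i + 1) : ℕ) : ℝ) = (k : ℝ) - i := by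
      have : k + 1 - (i + 1) = k - i := by omega
      rw [this, Nat.cast_sub hi]
    rw [Finset.sum_add_distrib, hsplit (fun _ => (1 : ℝ))]
    simp only [Finset.sum_const, nsmul_eq_mul, mul_one, Finset.card_range,
      Nat.card_Ico, hki]
    push_cast
    ring
  -- sum of a_j * cost
  have h2 : ∑ j ∈ Finset.range (k + 1), a j * Cost c₁ c₂ k i j
      = B * T + (T' - c₁ ^ (k + 1) - c₂ ^ (k + 1)) := by
    have : ∀ j, a j * Cost c₁ c₂ k i j
        = B * a j + a j * (if i < j then c₁ else if i = j then 0 else c₂) := by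
      intro j; simp only [Cost, hB]; ring
    simp only [this]
    rw [Finset.sum_add_distrib, hsplit a, ← Finset.mul_sum, ← hTsum, hS]
  -- main computation
  have hmain : ∑ j ∈ Finset.range (k + 1),
      (1 - (k : ℝ) * c₁ ^ (k - j) * c₂ ^ j / T) * Cost c₁ c₂ k i j
      = ∑ j ∈ Finset.range (k + 1), Cost c₁ c₂ k i j
        - ((k : ℝ) / T) * ∑ j ∈ Finset.range (k + 1), a j * Cost c₁ c₂ k i j := by
    rw [Finset.mul_sum, ← Finset.sum_sub_distrib]
    refine Finset.sum_congr rfl fun j hj => ?_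
    simp only [ha]
    field_simp
  rw [hmain, h1, h2]
  field_simp
  linear_combination (k : ℝ) * hTT
end

section
/- For n boxes with positive costs, defining T_k([n]) as the complete homogeneous symmetric polynomial of degree k and U([n],k) = k·T_{k+1}([n])/T_k([n]), the recursion U([n],k) = c_n + (c_n·T_{k−1}([n])/T_k([n]))·U([n],k−1) + (T_k([n−1])/T_k([n]))·U([n−1],k) holds for n + k ≥ 3 with n,k ≥ 1. -/
/-- `T` with integer degree, with the convention `T_j = 0` for `j < 0`. -/
noncomputable def Tz (c : ℕ → ℝ) (n : ℕ) (k : ℤ) : ℝ :=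
  if 0 ≤ k then T c n k.toNat else 0

/-- U([n],k) = k·T_{k+1}([n])/T_k([n]). -/
noncomputable def U (c : ℕ → ℝ) (n k : ℕ) : ℝ := (k : ℝ) * T c n (k + 1) / T c n k

open Finset Finset.Nat

lemma T_zero_right (c : ℕ → ℝ) (n : ℕ) : T c n 0 = 1 := by
  simp [T, antidiagonalTuple_zero_right]

lemma T_zero_left (c : ℕ → ℝ) (k : ℕ) : T c 0 (k + 1) = 0 := by
  simp [T]

lemma T_succ (c : ℕ → ℝ) (n K : ℕ) :
    T c (n + 1) K = ∑ p ∈ antidiagonal K, c 0 ^ p.1 * T (fun i => c (i + 1)) n p.2 := by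
  unfold T
  simp_rw [Finset.mul_sum]
  rw [Finset.sum_sigma']
  refine Finset.sum_bij' (fun x _ => (⟨(x 0, ∑ i : Fin n, x i.succ), Fin.tail x⟩ :
      (_ : ℕ × ℕ) × (Fin n → ℕ))) (fun q _ => Fin.cons q.1.1 q.2) ?_ ?_ ?_ ?_ ?_
  · intro a ha
    rw [mem_antidiagonalTuple, Fin.sum_univ_succ] at ha
    simp only [Finset.mem_sigma, Finset.HasAntidiagonal.mem_antidiagonal, mem_antidiagonalTuple]
    exact ⟨ha, rfl⟩
  · intro q hq
    simp only [Finset.mem_sigma, Finset.HasAntidiagonal.mem_antidiagonal, mem_antidiagonalTuple] at hq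
    rw [mem_antidiagonalTuple, Fin.sum_univ_succ]
    simp only [Fin.cons_zero, Fin.cons_succ]
    rw [hq.2, hq.1]
  · intro a _
    exact Fin.cons_self_tail a
  · intro q hq
    simp only [Finset.mem_sigma, Finset.HasAntidiagonal.mem_antidiagonal, mem_antidiagonalTuple] at hq
    refine Sigma.ext ?_ ?_
    · simp only [Fin.cons_zero, Fin.cons_succ, hq.2]
    · simp [Fin.tail_cons]
  · intro a _
    rw [Fin.prod_univ_succ]
    congr 1

lemma T_first (c : ℕ → ℝ) (n K : ℕ) :
    T c (n + 1) (K + 1) = c 0 * T c (n + 1) K + T (fun i => c (i + 1)) n (K + 1) := by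
  rw [T_succ c n (K + 1), T_succ c n K, Finset.Nat.antidiagonal_succ, Finset.sum_cons,
    Finset.sum_map, Finset.mul_sum]
  simp only [pow_zero, one_mul, Function.Embedding.coeFn_mk, Function.Embedding.prodMap,
    Function.Embedding.refl_apply, Nat.succ_eq_add_one, pow_succ]
  rw [add_comm]
  congr 1
  exact Finset.sum_congr rfl fun p _ => by simp only [Prod.map, Function.Embedding.refl_apply,
    Function.Embedding.coeFn_mk, Nat.succ_eq_add_one]; ring

lemma T_last (c : ℕ → ℝ) (n : ℕ) : ∀ K, ∀ c : ℕ → ℝ,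
    T c (n + 1) (K + 1) = c n * T c (n + 1) K + T c n (K + 1) := by
  induction n with
  | zero =>
    intro K c
    rw [T_first, T_zero_left, T_zero_left]
  | succ n ih =>
    intro K c
    induction K with
    | zero =>
      have h1 := T_first c (n + 1) 0
      have h3 := ih 0 (fun i => c (i + 1))
      have h5 := T_first c n 0
      simp only [T_zero_right] at h1 h3 h5 ⊢
      linear_combination h1 + h3 - h5
    | succ K ihK =>
      have h1 := T_first c (n + 1) (K + 1)
      have h2 := ihK
      have h3 := ih (K + 1) (fun i => c (i + 1))
      have h4 := T_first c (n + 1) K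
      have h5 := T_first c n (K + 1)
      linear_combination h1 + h3 - h5 + c 0 * h2 - c (n + 1) * h4

lemma T_pos (c : ℕ → ℝ) (hc : ∀ i, 0 < c i) (n k : ℕ) (hn : 1 ≤ n) : 0 < T c n k := by
  unfold T
  apply Finset.sum_pos
  · intro x _
    exact Finset.prod_pos fun i _ => pow_pos (hc i) _
  · obtain ⟨m, rfl⟩ := Nat.exists_eq_succ_of_ne_zero (by omega : n ≠ 0)
    exact ⟨Fin.cons k (fun _ => 0), mem_antidiagonalTuple.mpr (by simp [Fin.sum_cons])⟩

/-- recursion for U. -/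
theorem stmt9 (c : ℕ → ℝ) (hc : ∀ i, 0 < c i) (n k : ℕ)
    (hn : 1 ≤ n) (hk : 1 ≤ k) (hnk : 3 ≤ n + k) :
    U c n k = c (n - 1) + (c (n - 1) * T c n (k - 1) / T c n k) * U c n (k - 1)
      + (T c (n - 1) k / T c n k) * U c (n - 1) k := by
  obtain ⟨m, rfl⟩ := Nat.exists_eq_succ_of_ne_zero (by omega : n ≠ 0)
  obtain ⟨j, rfl⟩ := Nat.exists_eq_succ_of_ne_zero (by omega : k ≠ 0)
  simp only [Nat.succ_eq_add_one, Nat.add_sub_cancel]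
  have hA : 0 < T c (m + 1) (j + 1) := T_pos c hc _ _ le_add_self
  have hB : 0 < T c (m + 1) j := T_pos c hc _ _ le_add_self
  have h2 : (c m * T c (m + 1) j / T c (m + 1) (j + 1)) * U c (m + 1) j
      = (j : ℝ) * c m := by
    unfold U
    field_simp
  have h3 : (T c m (j + 1) / T c (m + 1) (j + 1)) * U c m (j + 1)
      = ((j : ℝ) + 1) * T c m (j + 1 + 1) / T c (m + 1) (j + 1) := by
    cases m with
    | zero => simp [T_zero_left, U]
    | succ m' =>
      have hC : 0 < T c (m' + 1) (j + 1) := T_pos c hc _ _ le_add_self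
      unfold U
      push_cast
      field_simp
  rw [h2, h3]
  have hlast := T_last c m (j + 1) c
  unfold U
  rw [hlast]
  push_cast
  field_simp
  ring
end

section
/- With P_s as in the Searcher's optimal mixed strategy, for every t ∈ {0,...,k}: (∑_{i=1}^{n−1} c_i)·(∑_{i=0}^{t−1} P_i) + V([n−1], k−t)·(∑_{i=t}^k P_i) + c_n·(∑_{i=t+1}^k P_i) = V([n], k), where V([m],j) = T_1([m]) − T_{j+1}([m])/T_j([m]). -/
lemma T_zero (c : ℕ → ℝ) (m : ℕ) : T c m 0 = 1 := by
  simp [T, Finset.Nat.antidiagonalTuple_zero_right]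

lemma T_pos_s12 (c : ℕ → ℝ) (hc : ∀ i, 0 < c i) (m j : ℕ) : 0 < T c (m + 1) j := by
  apply Finset.sum_pos
  · intro x _
    exact Finset.prod_pos fun i _ => pow_pos (hc i) _
  · exact ⟨fun i => if i = 0 then j else 0,
      Finset.Nat.mem_antidiagonalTuple.2 (by simp)⟩

lemma T_rec (c : ℕ → ℝ) (m j : ℕ) :
    T c (m + 1) (j + 1) = T c m (j + 1) + c m * T c (m + 1) j := by
  classical
  unfold T
  rw [← Finset.sum_filter_add_sum_filter_not (Finset.Nat.antidiagonalTuple (m+1) (j+1))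
    (fun x => x (Fin.last m) = 0)]
  congr 1
  · refine Finset.sum_nbij' (i := fun x => Fin.init x) (j := fun y => Fin.snoc y 0)
      ?_ ?_ ?_ ?_ ?_
    · intro x hx
      simp only [Finset.mem_filter, Finset.Nat.mem_antidiagonalTuple] at hx
      rw [Finset.Nat.mem_antidiagonalTuple]
      rw [Fin.sum_univ_castSucc, hx.2, add_zero] at *
      exact hx.1
    · intro y hy
      rw [Finset.Nat.mem_antidiagonalTuple] at hy
      simp only [Finset.mem_filter, Finset.Nat.mem_antidiagonalTuple]
      constructor
      · rw [Fin.sum_univ_castSucc]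
        simp [hy]
      · simp
    · intro x hx
      simp only [Finset.mem_filter] at hx
      rw [← hx.2]
      exact Fin.snoc_init_self x
    · intro y hy
      simp
    · intro x hx
      simp only [Finset.mem_filter] at hx
      rw [Fin.prod_univ_castSucc, hx.2]
      simp [Fin.init]
  · rw [Finset.mul_sum]
    refine Finset.sum_nbij'
      (i := fun x => Fin.snoc (Fin.init x) (x (Fin.last m) - 1))
      (j := fun y => Fin.snoc (Fin.init y) (y (Fin.last m) + 1)) ?_ ?_ ?_ ?_ ?_
    · intro x hx
      simp only [Finset.mem_filter, Finset.Nat.mem_antidiagonalTuple] at hx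
      rw [Finset.Nat.mem_antidiagonalTuple]
      rw [Fin.sum_univ_castSucc] at hx ⊢
      simp only [Fin.snoc_castSucc, Fin.snoc_last]
      have h1 : 1 ≤ x (Fin.last m) := Nat.one_le_iff_ne_zero.2 hx.2
      have : (∑ i : Fin m, Fin.init x i) = ∑ i : Fin m, x i.castSucc := by
        apply Finset.sum_congr rfl; intro i _; rfl
      omega
    · intro y hy
      rw [Finset.Nat.mem_antidiagonalTuple] at hy
      simp only [Finset.mem_filter, Finset.Nat.mem_antidiagonalTuple]
      rw [Fin.sum_univ_castSucc] at hy
      constructor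
      · rw [Fin.sum_univ_castSucc]
        simp only [Fin.snoc_castSucc, Fin.snoc_last]
        have : (∑ i : Fin m, Fin.init y i) = ∑ i : Fin m, y i.castSucc := by
          apply Finset.sum_congr rfl; intro i _; rfl
        omega
      · simp
    · intro x hx
      simp only [Finset.mem_filter] at hx
      have h1 : 1 ≤ x (Fin.last m) := Nat.one_le_iff_ne_zero.2 hx.2
      funext i
      rcases Fin.eq_castSucc_or_eq_last i with ⟨i', rfl⟩ | rfl
      · simp [Fin.init]
      · simp only [Fin.snoc_last, Fin.init_snoc]
        omega
    · intro y hy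
      funext i
      rcases Fin.eq_castSucc_or_eq_last i with ⟨i', rfl⟩ | rfl
      · simp [Fin.init]
      · simp only [Fin.snoc_last, Fin.init_snoc]
        omega
    · intro x hx
      simp only [Finset.mem_filter] at hx
      have h1 : 1 ≤ x (Fin.last m) := Nat.one_le_iff_ne_zero.2 hx.2
      rw [Fin.prod_univ_castSucc, Fin.prod_univ_castSucc]
      simp only [Fin.snoc_castSucc, Fin.snoc_last, Fin.val_last]
      have : c m ^ x (Fin.last m) = c m * c m ^ (x (Fin.last m) - 1) := by
        conv_lhs => rw [show x (Fin.last m) = (x (Fin.last m) - 1) + 1 by omega]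
        rw [pow_succ]; ring
      rw [this]
      have hinit : (∏ i : Fin m, c i.castSucc ^ x i.castSucc)
          = ∏ i : Fin m, c i.castSucc ^ Fin.init x i := by
        apply Finset.prod_congr rfl; intro i _; rfl
      rw [hinit]; ring

lemma T_one_s12 (c : ℕ → ℝ) (m : ℕ) : T c m 1 = ∑ i ∈ Finset.range m, c i := by
  induction m with
  | zero => simp [T, Finset.Nat.antidiagonalTuple_zero_succ]
  | succ m ih =>
    have := T_rec c m 0
    rw [T_zero] at this
    rw [this, ih, Finset.sum_range_succ]
    ring

/-- V([m],j) = T_1([m]) − T_{j+1}([m])/T_j([m]). -/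
noncomputable def V (c : ℕ → ℝ) (m j : ℕ) : ℝ := T c m 1 - T c m (j + 1) / T c m j

/-- P_s of the Searcher's optimal mixed strategy. -/
noncomputable def P (c : ℕ → ℝ) (n k s : ℕ) : ℝ :=
  (Tz c n ((k : ℤ) - s) / Tz c (n - 1) ((k : ℤ) - s + 1)
      - Tz c n ((k : ℤ) - s - 1) / Tz c (n - 1) ((k : ℤ) - s))
    / (Tz c n (k : ℤ) / Tz c (n - 1) ((k : ℤ) + 1))

lemma Tz_coe (c : ℕ → ℝ) (n a : ℕ) : Tz c n (a : ℤ) = T c n a := by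
  simp [Tz]

lemma Tz_neg_one (c : ℕ → ℝ) (n : ℕ) : Tz c n (-1) = 0 := by
  simp [Tz]

/-- the strategy P equalizes the regret. -/
theorem stmt12 (c : ℕ → ℝ) (hc : ∀ i, 0 < c i) (n k : ℕ) (hn : 2 ≤ n) (hk : 1 ≤ k)
    (t : ℕ) (ht : t ≤ k) :
    (∑ i ∈ Finset.range (n - 1), c i) * (∑ i ∈ Finset.range t, P c n k i)
      + V c (n - 1) (k - t) * (∑ i ∈ Finset.Icc t k, P c n k i)
      + c (n - 1) * (∑ i ∈ Finset.Icc (t + 1) k, P c n k i) = V c n k := by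
  obtain ⟨m, rfl⟩ : ∃ m, n = m + 2 := ⟨n - 2, by omega⟩
  obtain ⟨j, rfl⟩ : ∃ j, k = t + j := ⟨k - t, by omega⟩
  have hm1 : m + 2 - 1 = m + 1 := rfl
  rw [hm1]
  set g : ℕ → ℝ := fun s =>
    Tz c (m + 2) (((t + j : ℕ) : ℤ) - s) / Tz c (m + 1) (((t + j : ℕ) : ℤ) - s + 1) with hg
  set C : ℝ := T c (m + 1) (t + j + 1) / T c (m + 2) (t + j) with hC
  have hgshift : ∀ s : ℕ, g (s + 1)
      = Tz c (m + 2) (((t + j : ℕ) : ℤ) - s - 1) / Tz c (m + 1) (((t + j : ℕ) : ℤ) - s) := by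
    intro s
    show Tz c (m + 2) (((t + j : ℕ) : ℤ) - ((s + 1 : ℕ) : ℤ))
        / Tz c (m + 1) (((t + j : ℕ) : ℤ) - ((s + 1 : ℕ) : ℤ) + 1) = _
    rw [show ((t + j : ℕ) : ℤ) - ((s + 1 : ℕ) : ℤ) = ((t + j : ℕ) : ℤ) - s - 1 by
      push_cast; ring]
    rw [show ((t + j : ℕ) : ℤ) - (s : ℤ) - 1 + 1 = ((t + j : ℕ) : ℤ) - s by ring]
  have hP : ∀ s : ℕ, P c (m + 2) (t + j) s = (g s - g (s + 1)) * C := by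
    intro s
    rw [P, hm1, hgshift s]
    rw [show (((t + j : ℕ) : ℤ) + 1) = ((t + j + 1 : ℕ) : ℤ) by push_cast; ring]
    rw [Tz_coe, Tz_coe, div_div_eq_mul_div, mul_div_assoc]
  have hTpos1 : ∀ a, 0 < T c (m + 1) a := fun a => T_pos_s12 c hc m a
  have hTpos2 : ∀ a, 0 < T c (m + 2) a := fun a => T_pos_s12 c hc (m + 1) a
  have hg0 : g 0 = T c (m + 2) (t + j) / T c (m + 1) (t + j + 1) := by
    show Tz c (m + 2) (((t + j : ℕ) : ℤ) - ((0 : ℕ) : ℤ))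
        / Tz c (m + 1) (((t + j : ℕ) : ℤ) - ((0 : ℕ) : ℤ) + 1) = _
    rw [show ((t + j : ℕ) : ℤ) - ((0 : ℕ) : ℤ) = ((t + j : ℕ) : ℤ) by push_cast; ring]
    rw [show ((t + j : ℕ) : ℤ) + 1 = ((t + j + 1 : ℕ) : ℤ) by push_cast; ring]
    rw [Tz_coe, Tz_coe]
  have hgt : g t = T c (m + 2) j / T c (m + 1) (j + 1) := by
    show Tz c (m + 2) (((t + j : ℕ) : ℤ) - (t : ℤ))
        / Tz c (m + 1) (((t + j : ℕ) : ℤ) - (t : ℤ) + 1) = _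
    rw [show ((t + j : ℕ) : ℤ) - (t : ℤ) = ((j : ℕ) : ℤ) by push_cast; ring]
    rw [show ((j : ℕ) : ℤ) + 1 = ((j + 1 : ℕ) : ℤ) by push_cast; ring]
    rw [Tz_coe, Tz_coe]
  have hgt1 : g (t + 1) = Tz c (m + 2) ((j : ℤ) - 1) / T c (m + 1) j := by
    rw [hgshift t]
    rw [show ((t + j : ℕ) : ℤ) - (t : ℤ) - 1 = (j : ℤ) - 1 by push_cast; ring]
    rw [show ((t + j : ℕ) : ℤ) - (t : ℤ) = ((j : ℕ) : ℤ) by push_cast; ring]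
    rw [Tz_coe]
  have hgend : ∀ a : ℕ, g (t + j + 1 + a) = 0 := by
    intro a
    show Tz c (m + 2) (((t + j : ℕ) : ℤ) - ((t + j + 1 + a : ℕ) : ℤ))
        / Tz c (m + 1) (((t + j : ℕ) : ℤ) - ((t + j + 1 + a : ℕ) : ℤ) + 1) = _
    have : Tz c (m + 2) (((t + j : ℕ) : ℤ) - ((t + j + 1 + a : ℕ) : ℤ)) = 0 := by
      rw [Tz, if_neg]
      push_cast
      omega
    rw [this, zero_div]
  have tele : ∀ (a N : ℕ),
      ∑ i ∈ Finset.range N, (g (a + i) - g (a + i + 1)) = g a - g (a + N) := by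
    intro a N
    induction N with
    | zero => simp
    | succ N ih =>
      rw [Finset.sum_range_succ, ih, show a + (N + 1) = a + N + 1 from rfl]
      ring
  have h1 : ∑ i ∈ Finset.range t, P c (m + 2) (t + j) i = (g 0 - g t) * C := by
    simp_rw [hP]
    rw [← Finset.sum_mul, Finset.sum_range_sub' g t]
  have h2 : ∑ i ∈ Finset.Icc t (t + j), P c (m + 2) (t + j) i = g t * C := by
    simp_rw [hP]
    rw [← Finset.sum_mul, ← Finset.Ico_add_one_right_eq_Icc, Finset.sum_Ico_eq_sum_range]
    rw [show t + j + 1 - t = j + 1 by omega, tele t (j + 1)]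
    rw [show t + (j + 1) = t + j + 1 + 0 by omega, hgend 0, sub_zero]
  have h3 : ∑ i ∈ Finset.Icc (t + 1) (t + j), P c (m + 2) (t + j) i = g (t + 1) * C := by
    simp_rw [hP]
    rw [← Finset.sum_mul, ← Finset.Ico_add_one_right_eq_Icc, Finset.sum_Ico_eq_sum_range]
    rw [show t + j + 1 - (t + 1) = j by omega, tele (t + 1) j]
    rw [show t + 1 + j = t + j + 1 + 0 by omega, hgend 0, sub_zero]
  rw [h1, h2, h3, hg0, hgt, hgt1]
  rw [show t + j - t = j by omega]
  have hrecj : T c (m + 2) j = T c (m + 1) j + c (m + 1) * Tz c (m + 2) ((j : ℤ) - 1) := by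
    cases j with
    | zero => simp [T_zero, Tz]
    | succ l =>
      rw [show ((l + 1 : ℕ) : ℤ) - 1 = ((l : ℕ) : ℤ) by push_cast; ring, Tz_coe]
      exact T_rec c (m + 1) l
  have hrecK : T c (m + 2) (t + j + 1)
      = T c (m + 1) (t + j + 1) + c (m + 1) * T c (m + 2) (t + j) := T_rec c (m + 1) (t + j)
  have hsum : ∑ i ∈ Finset.range (m + 1), c i = T c (m + 1) 1 := (T_one_s12 c (m + 1)).symm
  have hT2one : T c (m + 2) 1 = T c (m + 1) 1 + c (m + 1) := by
    rw [T_one_s12, T_one_s12, Finset.sum_range_succ]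
  rw [V, V, hsum, hT2one, hC, hrecj, hrecK]
  have ha := (hTpos1 j).ne'
  have hb := (hTpos1 (j + 1)).ne'
  have hu := (hTpos2 (t + j)).ne'
  have hv := (hTpos1 (t + j + 1)).ne'
  field_simp
  ring
end
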